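/- Let m be a positive integer with m ≡ 2 (mod 4) and h a positive integer with gcd(m,h) = 2, and set n = 2^m − 1. Then gcd(2^h + 1, 2^m − 1) = 1, and the 2-cyclotomic coset of 2^h + 1 modulo n has exactly m elements. -/

import Mathlib

/-- The 2-cyclotomic coset of `j` modulo `n`. -/
def cycCoset (n j : ℕ) : Set ℕ := {x | ∃ k : ℕ, x = j * 2 ^ k % n}

theorem stmt_2 (m h : ℕ) (hm : 0 < m) (hm4 : m % 4 = 2) (hh : 0 < h)
    (hgcd : Nat.gcd m h = 2) (n : ℕ) (hn : n = 2 ^ m - 1) :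
    Nat.gcd (2 ^ h + 1) (2 ^ m - 1) = 1 ∧ (cycCoset n (2 ^ h + 1)).ncard = m := by
  have hm2 : 2 ≤ m := by omega
  -- gcd (2h) m = 2
  have hg2 : Nat.gcd (2 * h) m = 2 := by
    have hdm : (2 : ℕ) ∣ m := by omega
    have hd2 : (2 : ℕ) ∣ Nat.gcd (2 * h) m := Nat.dvd_gcd ⟨h, rfl⟩ hdm
    have hd4 : Nat.gcd (2 * h) m ∣ 4 := by
      have h1 : Nat.gcd (2 * h) m ∣ Nat.gcd (2 * h) (2 * m) :=
        Nat.dvd_gcd (Nat.gcd_dvd_left _ _) ((Nat.gcd_dvd_right _ _).mul_left 2)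
      have h2 : Nat.gcd (2 * h) (2 * m) = 4 := by
        rw [Nat.gcd_mul_left, Nat.gcd_comm, hgcd]
      rwa [h2] at h1
    have hdvdm : Nat.gcd (2 * h) m ∣ m := Nat.gcd_dvd_right _ _
    have hle : Nat.gcd (2 * h) m ≤ 4 := Nat.le_of_dvd (by norm_num) hd4
    have hpos : 0 < Nat.gcd (2 * h) m := Nat.gcd_pos_of_pos_right _ hm
    have : Nat.gcd (2 * h) m = 2 ∨ Nat.gcd (2 * h) m = 4 := by omega
    rcases this with h24 | h24
    · exact h24
    · exfalso
      rw [h24] at hdvdm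
      omega
  -- first part
  set d := Nat.gcd (2 ^ h + 1) (2 ^ m - 1) with hd
  have hnpos : 0 < 2 ^ m - 1 := by
    have : (2 : ℕ) ^ 2 ≤ 2 ^ m := Nat.pow_le_pow_right (by norm_num) hm2
    omega
  have hdpos : 0 < d := Nat.gcd_pos_of_pos_right _ hnpos
  haveI : NeZero d := ⟨hdpos.ne'⟩
  have pow_one_of_dvd : ∀ k : ℕ, d ∣ 2 ^ k - 1 → (2 : ZMod d) ^ k = 1 := by
    intro k hk
    have h1 : (1 : ℕ) ≤ 2 ^ k := Nat.one_le_two_pow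
    have h0 : ((2 ^ k - 1 : ℕ) : ZMod d) = 0 := (ZMod.natCast_eq_zero_iff _ _).mpr hk
    have : ((2 ^ k : ℕ) : ZMod d) = 1 := by
      rw [← Nat.sub_add_cancel h1, Nat.cast_add, h0, Nat.cast_one, zero_add]
    push_cast at this
    exact this
  have hdvd2h : d ∣ 2 ^ (2 * h) - 1 := by
    have hfact : (2 : ℕ) ^ h + 1 ∣ 2 ^ (2 * h) - 1 := by
      have h1 : (1 : ℕ) ≤ 2 ^ h := Nat.one_le_two_pow
      have heq : (2 : ℕ) ^ (2 * h) - 1 = (2 ^ h + 1) * (2 ^ h - 1) := by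
        have h2 : (2 : ℕ) ^ (2 * h) - 1 = (2 ^ h) ^ 2 - 1 ^ 2 := by
          rw [mul_comm, pow_mul, one_pow]
        rw [h2, Nat.sq_sub_sq]
      rw [heq]
      exact Dvd.intro _ rfl
    exact (Nat.gcd_dvd_left _ _).trans hfact
  have hdvdm' : d ∣ 2 ^ m - 1 := Nat.gcd_dvd_right _ _
  have hpow2h : (2 : ZMod d) ^ (2 * h) = 1 := pow_one_of_dvd _ hdvd2h
  have hpowm : (2 : ZMod d) ^ m = 1 := pow_one_of_dvd _ hdvdm'
  have hpow2 : (2 : ZMod d) ^ 2 = 1 := by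
    have := (pow_gcd_eq_one (a := (2 : ZMod d))).mpr ⟨hpow2h, hpowm⟩
    rwa [hg2] at this
  have hd3 : d ∣ 3 := by
    have h3 : ((3 : ℕ) : ZMod d) = 0 := by
      push_cast
      linear_combination hpow2
    exact (ZMod.natCast_eq_zero_iff _ _).mp h3
  have part1 : d = 1 := by
    rcases (Nat.prime_three).eq_one_or_self_of_dvd d hd3 with h1 | h1
    · exact h1
    · exfalso
      have h3dvd : (3 : ℕ) ∣ 2 ^ h + 1 := h1 ▸ Nat.gcd_dvd_left _ _
      obtain ⟨h', rfl⟩ : 2 ∣ h := by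
        have h2g : (2 : ℕ) ∣ Nat.gcd m h := by rw [hgcd]
        exact h2g.trans (Nat.gcd_dvd_right m h)
      have hp : (2 : ℕ) ^ (2 * h') = 4 ^ h' := by rw [pow_mul]; norm_num
      have hmod : 4 ^ h' % 3 = 1 := by
        rw [Nat.pow_mod]
        norm_num
      rw [hp] at h3dvd
      omega
  refine ⟨part1, ?_⟩
  -- second part
  set j := 2 ^ h + 1 with hj
  have hn1 : 1 < n := by
    have : (2 : ℕ) ^ 2 ≤ 2 ^ m := Nat.pow_le_pow_right (by norm_num) hm2
    omega
  have hcopnj : Nat.gcd n j = 1 := by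
    rw [hn, Nat.gcd_comm]; exact part1
  have hcopn2 : Nat.Coprime n 2 := by
    have h2dvd : (2 : ℕ) ∣ 2 ^ m := dvd_pow_self 2 hm.ne'
    have hodd : n % 2 = 1 := by omega
    have : Odd n := Nat.odd_iff.mpr hodd
    exact Nat.coprime_two_right.mpr this
  have hmodeq1 : (2 : ℕ) ^ m ≡ 1 [MOD n] := by
    have h1 : (1 : ℕ) ≡ 2 ^ m [MOD n] := by
      rw [Nat.modEq_iff_dvd' Nat.one_le_two_pow, hn]
    exact h1.symm
  have key : ∀ k : ℕ, (2 : ℕ) ^ k ≡ 2 ^ (k % m) [MOD n] := by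
    intro k
    conv_lhs => rw [← Nat.div_add_mod k m]
    rw [pow_add, pow_mul]
    calc ((2 : ℕ) ^ m) ^ (k / m) * 2 ^ (k % m)
        ≡ 1 ^ (k / m) * 2 ^ (k % m) [MOD n] := Nat.ModEq.mul_right _ (hmodeq1.pow _)
      _ = 2 ^ (k % m) := by rw [one_pow, one_mul]
  have hset : cycCoset n j = ↑((Finset.range m).image fun k => j * 2 ^ k % n) := by
    ext x
    simp only [cycCoset, Set.mem_setOf_eq, Finset.coe_image, Finset.coe_range, Set.mem_image,
      Set.mem_Iio]
    constructor
    · rintro ⟨k, rfl⟩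
      exact ⟨k % m, Nat.mod_lt _ hm, (((key k).mul_left j).symm : _)⟩
    · rintro ⟨k, -, rfl⟩
      exact ⟨k, rfl⟩
  have cancel : ∀ a b : ℕ, a < m → b < m → a ≤ b → j * 2 ^ a % n = j * 2 ^ b % n → a = b := by
    intro a b ha hb hle heq
    by_contra hne
    have hlt : a < b := lt_of_le_of_ne hle hne
    have h2 : (2 : ℕ) ^ a ≡ 2 ^ b [MOD n] :=
      Nat.ModEq.cancel_left_of_coprime hcopnj heq
    have h2' : (2 : ℕ) ^ a * 1 ≡ 2 ^ a * 2 ^ (b - a) [MOD n] := by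
      rw [mul_one, ← pow_add, Nat.add_sub_cancel' hle]
      exact h2
    have h3 : (1 : ℕ) ≡ 2 ^ (b - a) [MOD n] :=
      Nat.ModEq.cancel_left_of_coprime (hcopn2.pow_right a) h2'
    have hsmall : 2 ^ (b - a) < n := by
      have hle1 : (2 : ℕ) ^ (b - a) ≤ 2 ^ (m - 1) :=
        Nat.pow_le_pow_right (by norm_num) (by omega)
      have h2m : (2 : ℕ) ^ m = 2 ^ (m - 1) * 2 := by
        rw [← pow_succ]
        congr 1
        omega
      have h2m1 : (2 : ℕ) ≤ 2 ^ (m - 1) := by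
        calc (2 : ℕ) = 2 ^ 1 := (pow_one 2).symm
          _ ≤ 2 ^ (m - 1) := Nat.pow_le_pow_right (by norm_num) (by omega)
      omega
    have h3' : 1 % n = 2 ^ (b - a) % n := h3
    rw [Nat.mod_eq_of_lt hn1, Nat.mod_eq_of_lt hsmall] at h3'
    have hge : 2 ≤ (2 : ℕ) ^ (b - a) := by
      calc (2 : ℕ) = 2 ^ 1 := (pow_one 2).symm
        _ ≤ 2 ^ (b - a) := Nat.pow_le_pow_right (by norm_num) (by omega)
    omega
  rw [hset, Set.ncard_coe_finset, Finset.card_image_of_injOn, Finset.card_range]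
  intro a ha b hb hab
  simp only [Finset.coe_range, Set.mem_Iio] at ha hb
  rcases le_total a b with hle | hle
  · exact cancel a b ha hb hle hab
  · exact (cancel b a hb ha hle hab.symm).symm
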